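/- Let F be a field, R the ring of ternions over F, and n ≥ 1. Every 2-dimensional F-linear subspace of F^{n+1} is the image, under the coordinate bijection (rad R)^{n+1} → F^{n+1}, of the intersection M ∩ (rad R)^{n+1} for some non-unimodular free cyclic submodule M of R^{n+1}. -/

import Mathlib

set_option synthInstance.maxHeartbeats 1000000
set_option maxHeartbeats 1000000

/-- The ring of ternions over a field `F`: the subring of `2×2` matrices over `F`
consisting of all upper triangular matrices. -/
def ternions (F : Type) [Field F] : Subring (Matrix (Fin 2) (Fin 2) F) where
  carrier := {A | A 1 0 = 0}
  zero_mem' := by simp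
  one_mem' := by simp [Matrix.one_apply]
  add_mem' := by
    intro a b ha hb
    simp only [Set.mem_setOf_eq, Matrix.add_apply] at *
    simp [ha, hb]
  neg_mem' := by
    intro a ha
    simp only [Set.mem_setOf_eq, Matrix.neg_apply] at *
    simp [ha]
  mul_mem' := by
    intro a b ha hb
    simp only [Set.mem_setOf_eq, Matrix.mul_apply, Fin.sum_univ_two] at *
    simp [ha, hb]


lemma ternions_lowleft {F : Type} [Field F] (r : ternions F) : r.val 1 0 = 0 := r.2

lemma ternions_mul_entry {F : Type} [Field F] (r s : ternions F) (i j : Fin 2) :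
    ((r * s : ternions F) : Matrix (Fin 2) (Fin 2) F) i j
      = r.val i 0 * s.val 0 j + r.val i 1 * s.val 1 j := by
  show (r.val * s.val) i j = _
  rw [Matrix.mul_apply, Fin.sum_univ_two]


set_option maxHeartbeats 2000000 in
/-- Every `2`-dimensional `F`-linear subspace of `F^{n+1}` is the image, under the
coordinate bijection `(rad R)^{n+1} → F^{n+1}`, of `M ∩ (rad R)^{n+1}` for some
non-unimodular free cyclic submodule `M = R·X` of `R^{n+1}`. -/
theorem ternion_line_is_trace_of_nonUnimodular_free (F : Type) [Field F] (n : ℕ)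
    (hn : 1 ≤ n) (W : Submodule F (Fin (n + 1) → F)) (hW : Module.finrank F W = 2) :
    ∃ X : Fin (n + 1) → ternions F,
      Function.Injective (fun r : ternions F => r • X) ∧
      (¬ ∃ φ : (Fin (n + 1) → ternions F) →ₗ[ternions F] ternions F, φ X = 1) ∧
      (W : Set (Fin (n + 1) → F)) =
        (fun v : Fin (n + 1) → ternions F => fun i => (v i).val 0 1) ''
          {v : Fin (n + 1) → ternions F | v ∈ Submodule.span (ternions F) {X} ∧
            ∀ i, (v i).val 0 0 = 0 ∧ (v i).val 1 1 = 0} := by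

  have hfd : Module.Finite F W := Module.finite_of_finrank_eq_succ hW
  let B := Module.finBasisOfFinrankEq F W hW
  set b : Fin (n+1) → F := ((B 0 : W) : Fin (n+1) → F) with hb
  set c : Fin (n+1) → F := ((B 1 : W) : Fin (n+1) → F) with hc
  have hbW : b ∈ W := (B 0).2
  have hcW : c ∈ W := (B 1).2
  have key : ∀ x y : F, (∀ i, x * b i + y * c i = 0) → x = 0 ∧ y = 0 := by
    have hli : LinearIndependent F (fun i : Fin 2 => ((B i : W) : Fin (n+1) → F)) :=
      B.linearIndependent.map' W.subtype (Submodule.ker_subtype W)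
    intro x y h
    have h2 := Fintype.linearIndependent_iff.mp hli ![x, y] ?_
    · exact ⟨h2 0, h2 1⟩
    · funext i
      simpa [Fin.sum_univ_two, b, c] using h i
  let X : Fin (n+1) → ternions F := fun i =>
    ⟨!![0, b i; 0, c i], by show !![0, b i; 0, c i] 1 0 = 0; simp⟩
  have hX00 : ∀ i, (X i).val 0 0 = 0 := fun i => by simp [X]
  have hX01 : ∀ i, (X i).val 0 1 = b i := fun i => by simp [X]
  have hX10 : ∀ i, (X i).val 1 0 = 0 := fun i => by simp [X]
  have hX11 : ∀ i, (X i).val 1 1 = c i := fun i => by simp [X]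
  -- entries of r • X
  have hsmul : ∀ (r : ternions F) (i : Fin (n+1)),
      ((r • X) i).val 0 1 = r.val 0 0 * b i + r.val 0 1 * c i ∧
      ((r • X) i).val 1 1 = r.val 1 1 * c i ∧
      ((r • X) i).val 0 0 = 0 ∧
      ((r • X) i).val 1 0 = 0 := by
    intro r i
    have h1 : (r • X) i = r * X i := rfl
    refine ⟨?_, ?_, ?_, ?_⟩ <;>
      rw [h1, ternions_mul_entry] <;>
      simp [hX00, hX01, hX10, hX11, ternions_lowleft r]
  refine ⟨X, ?_, ?_, ?_⟩
  · -- injectivity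
    intro r r' h
    have hE : ∀ i, ((r • X) i).val = ((r' • X) i).val :=
      fun i => congrArg Subtype.val (congrFun h i)
    have h01 : ∀ i, (r.val 0 0 - r'.val 0 0) * b i + (r.val 0 1 - r'.val 0 1) * c i = 0 := by
      intro i
      have h2 := congrFun (congrFun (hE i) 0) 1
      rw [(hsmul r i).1, (hsmul r' i).1] at h2
      linear_combination h2
    have h11 : ∀ i, (0:F) * b i + (r.val 1 1 - r'.val 1 1) * c i = 0 := by
      intro i
      have h2 := congrFun (congrFun (hE i) 1) 1
      rw [(hsmul r i).2.1, (hsmul r' i).2.1] at h2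
      linear_combination h2
    obtain ⟨e1, e2⟩ := key _ _ h01
    obtain ⟨-, e3⟩ := key _ _ h11
    apply Subtype.ext
    ext a d
    fin_cases a <;> fin_cases d
    · exact sub_eq_zero.mp e1
    · exact sub_eq_zero.mp e2
    · show r.val 1 0 = r'.val 1 0
      rw [ternions_lowleft r, ternions_lowleft r']
    · exact sub_eq_zero.mp e3
  · -- non-unimodular
    rintro ⟨φ, hφ⟩
    have hone : (φ X).val 0 0 = 1 := by rw [hφ]; rfl
    have hzero : (φ X).val 0 0 = 0 := by
      have hsingle : ∀ i : Fin (n+1),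
          Pi.single i (X i) = X i • (Pi.single i 1 : Fin (n+1) → ternions F) := by
        intro i
        funext j
        by_cases hij : i = j <;>
          simp [Pi.single_apply, hij, Pi.smul_apply, smul_eq_mul]
      have hXdec : φ X = ∑ i, X i * φ (Pi.single i 1 : Fin (n+1) → ternions F) := by
        conv_lhs => rw [← Finset.univ_sum_single X]
        rw [map_sum]
        refine Finset.sum_congr rfl fun i _ => ?_
        rw [hsingle i, map_smul]
        rfl
      rw [hXdec, AddSubmonoidClass.coe_finset_sum, Matrix.sum_apply]
      apply Finset.sum_eq_zero
      intro i _
      rw [ternions_mul_entry, hX00, ternions_lowleft]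
      ring
    rw [hone] at hzero
    exact one_ne_zero hzero
  · -- set equality
    ext w
    constructor
    · intro hw
      -- express w = x • b + y • c
      set u : W := ⟨w, hw⟩ with hu
      have hrep := B.sum_repr u
      set x : F := B.repr u 0 with hx
      set y : F := B.repr u 1 with hy
      have hwxy : ∀ i, w i = x * b i + y * c i := by
        intro i
        have := congrArg (fun z : W => (z : Fin (n+1) → F) i) hrep
        simp only [Fin.sum_univ_two] at this; simpa [b, c, x, y, u] using this.symm
      set r0 : ternions F := ⟨!![x, y; 0, 0], by show !![x,y;(0:F),0] 1 0 = 0; simp⟩ with hr0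
      refine ⟨r0 • X, ⟨Submodule.mem_span_singleton.mpr ⟨_, rfl⟩, ?_⟩, ?_⟩
      · intro i
        exact ⟨(hsmul r0 i).2.2.1, by rw [(hsmul r0 i).2.1]; simp [r0]⟩
      · funext i
        show ((r0 • X) i).val 0 1 = w i
        rw [(hsmul r0 i).1]
        simp [r0, hwxy i]
    · rintro ⟨v, ⟨hvspan, _⟩, rfl⟩
      obtain ⟨r, rfl⟩ := Submodule.mem_span_singleton.mp hvspan
      have hfun : (fun i => ((r • X) i).val 0 1) = r.val 0 0 • b + r.val 0 1 • c := by
        funext i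
        rw [(hsmul r i).1]
        simp
      show (fun i => ((r • X) i).val 0 1) ∈ W
      rw [hfun]
      exact W.add_mem (W.smul_mem _ hbW) (W.smul_mem _ hcW)
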